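/- There exists a (3g,3,4,1)-CDF for every positive integer g all of whose prime factors are congruent to 1 modulo 4. -/

import Mathlib

/-- The multiset of differences `f - f'` (with `f ≠ f'`) from a finset `F`. -/
def blockDiffs {G : Type*} [AddGroup G] [DecidableEq G] (F : Finset G) : Multiset G :=
  ((F ×ˢ F).filter fun p => p.1 ≠ p.2).val.map fun p => p.1 - p.2

/-- A `(gh,h,k,1)`-CDF (cyclic relative difference family): a family `𝓕` of
`k`-element subsets of `Z_{gh}` (base blocks, possibly with repetitions) such that
the multiset of differences from all base blocks contains every element of
`Z_{gh}` outside the subgroup `H = g·Z_{gh}` (of order `h`) exactly once and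
contains no element of `H`. -/
def IsCDF (g h k : ℕ) (𝓕 : Multiset (Finset (ZMod (g * h)))) : Prop :=
  (∀ F ∈ 𝓕, F.card = k) ∧
  (∀ x : ZMod (g * h), x ∈ AddSubgroup.zmultiples ((g : ZMod (g * h))) →
    (𝓕.bind blockDiffs).count x = 0) ∧
  (∀ x : ZMod (g * h), x ∉ AddSubgroup.zmultiples ((g : ZMod (g * h))) →
    (𝓕.bind blockDiffs).count x = 1)

lemma blockDiffs_quad {G : Type*} [AddGroup G] [DecidableEq G] (a b c d : G)
    (hab : a ≠ b) (hac : a ≠ c) (had : a ≠ d) (hbc : b ≠ c) (hbd : b ≠ d) (hcd : c ≠ d) :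
    blockDiffs ({a,b,c,d} : Finset G) =
      {c-d, b-d, a-d, a-c, b-c, d-c, a-b, c-b, d-b, b-a, c-a, d-a} := by
  have hv : ({a,b,c,d} : Finset G).val = a ::ₘ b ::ₘ c ::ₘ d ::ₘ 0 := by
    simp [Finset.insert_val, Multiset.ndinsert_of_notMem, hab, hac, had, hbc, hbd, hcd]
  simp only [blockDiffs, Finset.filter_val, Finset.product_val, hv]
  simp [Multiset.cons_bind, Multiset.filter_singleton, hab, hac, had, hbc, hbd, hcd,
    hab.symm, hac.symm, had.symm, hbc.symm, hbd.symm, hcd.symm]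

section Main
variable {g : ℕ} [NeZero g]

theorem main_construction (hg1 : 1 < g) (i : ZMod g) (hi : i * i = -1)
    (h2u : IsUnit (2 : ZMod g)) :
    ∃ 𝓕P : Multiset (Finset (ZMod g × ZMod 3)),
      (∀ F ∈ 𝓕P, F.card = 4) ∧
      (𝓕P.bind blockDiffs) =
        (Finset.univ.filter fun w : ZMod g × ZMod 3 => w.1 ≠ 0).val := by
  classical
  haveI : Fact (1 < g) := ⟨hg1⟩
  -- units
  have hiu : IsUnit i := IsUnit.of_mul_eq_one (-i) (by linear_combination -hi)
  have hmul2 : (1 + i) * (1 - i) = 2 := by linear_combination -hi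
  have h1pu : IsUnit (1 + i) := isUnit_of_mul_isUnit_left (hmul2 ▸ h2u)
  have h1mu : IsUnit (1 - i) := isUnit_of_mul_isUnit_right (hmul2 ▸ h2u)
  obtain ⟨v, hv⟩ : ∃ v, (1 - i) * v = 1 := h1mu.exists_right_inv
  have hvu : IsUnit v := IsUnit.of_mul_eq_one (1 - i) (by rw [mul_comm]; exact hv)
  have hi2 : i ^ 2 = -1 := by rw [sq]; exact hi
  have hi3 : i ^ 3 = -i := by rw [pow_succ, hi2]; ring
  have hi4 : i ^ 4 = 1 := by rw [show (4:ℕ) = 2*2 from rfl, pow_mul, hi2]; ring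
  have hipow : ∀ k : ℕ, i ^ k = 1 ∨ i ^ k = i ∨ i ^ k = -1 ∨ i ^ k = -i := by
    intro k
    induction k with
    | zero => left; rw [pow_zero]
    | succ k ih =>
      rcases ih with h | h | h | h
      · right; left; rw [pow_succ, h, one_mul]
      · right; right; left; rw [pow_succ, h, hi]
      · right; right; right; rw [pow_succ, h]; ring
      · left; rw [pow_succ, h]; linear_combination -hi
  have hcancel : ∀ x : ZMod g, x ≠ 0 → ∀ u w : ZMod g, IsUnit (u - w) → x * u ≠ x * w := by
    intro x hx u w hu heq
    obtain ⟨t, ht⟩ := hu.exists_right_inv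
    apply hx
    calc x = x * ((u - w) * t) := by rw [ht, mul_one]
    _ = (x * u - x * w) * t := by ring
    _ = 0 := by rw [heq]; ring
  have hxu : ∀ x : ZMod g, x ≠ 0 → ∀ u : ZMod g, IsUnit u → x * u ≠ 0 := by
    intro x hx u hu h0
    exact hcancel x hx u 0 (by simpa using hu) (by simpa using h0)
  -- the setoid of orbits of multiplication by powers of i
  let rel : ZMod g → ZMod g → Prop := fun a b => ∃ k : ℕ, b = i ^ k * a
  have hrefl : ∀ a, rel a a := fun a => ⟨0, by rw [pow_zero, one_mul]⟩
  have hsymm : ∀ {a b}, rel a b → rel b a := by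
    rintro a b ⟨k, rfl⟩
    exact ⟨3 * k, by
      rw [← mul_assoc, ← pow_add, show 3*k + k = 4*k by ring, pow_mul, hi4, one_pow, one_mul]⟩
  have htrans : ∀ {a b c}, rel a b → rel b c → rel a c := by
    rintro a b c ⟨k, rfl⟩ ⟨l, rfl⟩
    exact ⟨l + k, by rw [pow_add, mul_assoc]⟩
  let sto : Setoid (ZMod g) := ⟨rel, fun {a} => hrefl a, fun {a b} => hsymm, fun {a b c} => htrans⟩
  let rep : ZMod g → ZMod g := fun z => (Quotient.mk sto z).out
  have hrel_out : ∀ z, rel (rep z) z := by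
    intro z
    exact Quotient.exact (Quotient.out_eq (Quotient.mk sto z))
  have hrep_eq : ∀ a b, rel a b → rep a = rep b := by
    intro a b h
    show (Quotient.mk sto a).out = (Quotient.mk sto b).out
    rw [Quotient.sound (s := sto) h]
  have hrep_fix : ∀ a, rep (rep a) = rep a := fun a => hrep_eq _ _ (hrel_out a)
  set R' : Finset (ZMod g) := (Finset.univ.image rep).filter (· ≠ 0) with hR'
  have hR'mem : ∀ x ∈ R', x ≠ 0 ∧ rep x = x := by
    intro x hx
    rw [hR', Finset.mem_filter, Finset.mem_image] at hx
    obtain ⟨⟨a, -, rfl⟩, hne⟩ := hx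
    exact ⟨hne, hrep_fix a⟩
  have hrep_uniq : ∀ x ∈ R', ∀ z, rel x z → x = rep z := by
    intro x hx z hrel
    rw [← hrep_eq x z hrel]
    exact ((hR'mem x hx).2).symm
  -- orbits
  let orb : ZMod g → Finset (ZMod g) := fun x => {x * 1, x * i, x * (-1), x * (-i)}
  have memorb : ∀ x z, rel x z → z ∈ orb x := by
    intro x z hzx
    obtain ⟨k, rfl⟩ := hzx
    simp only [orb, Finset.mem_insert, Finset.mem_singleton]
    rcases hipow k with h | h | h | h <;> rw [h]
    · left; ring
    · right; left; ring
    · right; right; left; ring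
    · right; right; right; ring
  have orbrel : ∀ x z, z ∈ orb x → rel x z := by
    intro x z hz
    simp only [orb, Finset.mem_insert, Finset.mem_singleton] at hz
    rcases hz with h | h | h | h
    · exact ⟨0, by rw [h, pow_zero]; ring⟩
    · exact ⟨1, by rw [h, pow_one]; ring⟩
    · exact ⟨2, by rw [h, hi2]; ring⟩
    · exact ⟨3, by rw [h, hi3]; ring⟩
  have horbcard : ∀ x : ZMod g, x ≠ 0 → (orb x).card = 4 := by
    intro x hx
    have d1 := hcancel x hx 1 i (by simpa using h1mu)
    have d2 := hcancel x hx 1 (-1) (by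
      have : (1 : ZMod g) - (-1) = 2 := by ring
      rw [this]; exact h2u)
    have d3 := hcancel x hx 1 (-i) (by
      have : (1 : ZMod g) - (-i) = 1 + i := by ring
      rw [this]; exact h1pu)
    have d4 := hcancel x hx i (-1) (by
      have : i - (-1) = 1 + i := by ring
      rw [this]; exact h1pu)
    have d5 := hcancel x hx i (-i) (by
      have : i - (-i) = 2 * i := by ring
      rw [this]; exact h2u.mul hiu)
    have d6 := hcancel x hx (-1) (-i) (by
      have : (-1 : ZMod g) - (-i) = -(1 - i) := by ring
      rw [this]; exact h1mu.neg)
    simp only [mul_one, mul_neg, mul_neg_one] at d1 d2 d3 d4 d5 d6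
    simp only [orb]
    rw [Finset.card_insert_of_notMem (by simp [d1, d2, d3]),
      Finset.card_insert_of_notMem (by simp [d4, d5]),
      Finset.card_insert_of_notMem (by simp [d6]),
      Finset.card_singleton]
  have horb_ne : ∀ x : ZMod g, x ≠ 0 → ∀ z ∈ orb x, z ≠ 0 := by
    intro x hx z hz
    simp only [orb, Finset.mem_insert, Finset.mem_singleton] at hz
    rcases hz with h | h | h | h <;> rw [h]
    · exact hxu x hx 1 isUnit_one
    · exact hxu x hx i hiu
    · exact hxu x hx (-1) isUnit_one.neg
    · exact hxu x hx (-i) hiu.neg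
  have hrepne : ∀ z : ZMod g, z ≠ 0 → rep z ≠ 0 := by
    intro z hz h0
    obtain ⟨k, hk⟩ := hrel_out z
    rw [h0, mul_zero] at hk
    exact hz hk
  have hrepR' : ∀ z : ZMod g, z ≠ 0 → rep z ∈ R' := by
    intro z hz
    rw [hR', Finset.mem_filter, Finset.mem_image]
    exact ⟨⟨z, Finset.mem_univ z, rfl⟩, hrepne z hz⟩
  have hpart : Finset.univ.filter (fun z : ZMod g => z ≠ 0) = R'.biUnion orb := by
    ext z
    simp only [Finset.mem_filter, Finset.mem_univ, true_and, Finset.mem_biUnion]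
    constructor
    · intro hz
      exact ⟨rep z, hrepR' z hz, memorb _ _ (hrel_out z)⟩
    · rintro ⟨x, hxR, hzx⟩
      exact horb_ne x (hR'mem x hxR).1 z hzx
  have hdisj : ∀ x ∈ R', ∀ y ∈ R', x ≠ y → Disjoint (orb x) (orb y) := by
    intro x hx y hy hxy
    rw [Finset.disjoint_left]
    intro a hax hay
    exact hxy (by
      rw [hrep_uniq x hx a (orbrel x a hax), hrep_uniq y hy a (orbrel y a hay)])
  have hcard1 : (Finset.univ.filter (fun z : ZMod g => z ≠ 0)).card = 4 * R'.card := by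
    rw [hpart, Finset.card_biUnion hdisj]
    rw [Finset.sum_congr rfl (fun x hx => horbcard x (hR'mem x hx).1), Finset.sum_const,
      smul_eq_mul, mul_comm]

  -- blocks
  set blkP : ZMod g → Finset (ZMod g × ZMod 3) :=
    (fun x => {(x,0), (x*i,0), (x*(1+i),1), (0,1)}) with hblkP
  have h01 : (0 : ZMod 3) ≠ 1 := by decide
  have hdists : ∀ x : ZMod g, x ≠ 0 →
      ((x,(0:ZMod 3)) ≠ (x*i,0) ∧ (x,(0:ZMod 3)) ≠ (x*(1+i),1) ∧
       (x,(0:ZMod 3)) ≠ ((0:ZMod g),(1:ZMod 3)) ∧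
       ((x*i,(0:ZMod 3)) ≠ (x*(1+i),1)) ∧ ((x*i,(0:ZMod 3)) ≠ ((0:ZMod g),(1:ZMod 3))) ∧
       ((x*(1+i),(1:ZMod 3)) ≠ ((0:ZMod g),(1:ZMod 3)))) := by
    intro x hx
    have e1 : x ≠ x*i := by
      have := hcancel x hx 1 i (by simpa using h1mu); simpa using this
    have e2 : x*(1+i) ≠ 0 := hxu x hx _ h1pu
    refine ⟨?_, ?_, ?_, ?_, ?_, ?_⟩ <;> simp [Prod.ext_iff, e1, e2, h01]
  have hblkcard : ∀ x : ZMod g, x ≠ 0 → (blkP x).card = 4 := by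
    intro x hx
    obtain ⟨e1, e2, e3, e4, e5, e6⟩ := hdists x hx
    rw [hblkP]
    rw [Finset.card_insert_of_notMem (by simp [e1, e2, e3]),
      Finset.card_insert_of_notMem (by simp [e4, e5]),
      Finset.card_insert_of_notMem (by simp [e6]),
      Finset.card_singleton]
  have hDQ : ∀ x : ZMod g, x ≠ 0 → blockDiffs (blkP x) =
      {((x*(1+i),(1:ZMod 3)) - (0,1)), ((x*i,0) - (0,1)), ((x,0) - (0,1)),
       ((x,0) - (x*(1+i),1)), ((x*i,0) - (x*(1+i),1)), ((0,1) - (x*(1+i),1)),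
       ((x,0) - (x*i,0)), ((x*(1+i),1) - (x*i,0)), ((0,1) - (x*i,0)),
       ((x*i,0) - (x,0)), ((x*(1+i),1) - (x,0)), ((0,1) - (x,0))} := by
    intro x hx
    obtain ⟨e1, e2, e3, e4, e5, e6⟩ := hdists x hx
    rw [hblkP]
    exact blockDiffs_quad _ _ _ _ e1 e2 e3 e4 e5 e6
  -- coverage
  have hthree : ∀ c : ZMod 3, c = 0 ∨ c = 1 ∨ c = -1 := by decide
  have hcov : ∀ w : ZMod g × ZMod 3, w.1 ≠ 0 →
      w ∈ R'.val.bind (fun x => blockDiffs (blkP x)) := by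
    rintro ⟨w1, w2⟩ hw
    simp only at hw
    rw [Multiset.mem_bind]
    set z' : ZMod g := if w2 = 0 then w1 * v else w1 with hz'
    have hz'ne : z' ≠ 0 := by
      rw [hz']; split
      · exact hxu _ hw v hvu
      · exact hw
    obtain ⟨k, hk⟩ := hrel_out z'
    set x := rep z' with hxdef
    have hx0 : x ≠ 0 := hrepne z' hz'ne
    refine ⟨x, Finset.mem_def.1 (hrepR' z' hz'ne), ?_⟩
    rw [hDQ x hx0]
    simp only [Multiset.mem_cons, Multiset.mem_singleton, Prod.mk_sub_mk, Prod.mk.injEq,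
      sub_zero, zero_sub, sub_self]
    rcases hthree w2 with h2 | h2 | h2
    · have hzz : z' = w1 * v := by rw [hz', if_pos h2]
      have hw1 : w1 = i ^ k * x * (1 - i) := by
        rw [← hk, hzz]; linear_combination (-w1) * hv
      rcases hipow k with h | h | h | h <;> rw [h] at hw1
      · have hc : w1 = x - x * i := by rw [hw1]; ring
        rw [h2, hc]; simp
      · have hc : w1 = x * (1 + i) := by rw [hw1]; linear_combination (-x) * hi
        rw [h2, hc]; simp
      · have hc : w1 = x * i - x := by rw [hw1]; ring
        rw [h2, hc]; simp
      · have hc : w1 = -(x * (1 + i)) := by rw [hw1]; linear_combination x * hi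
        rw [h2, hc]; simp
    · have hzz : z' = w1 := by rw [hz', if_neg (by rw [h2]; decide)]
      have hw1 : w1 = i ^ k * x := by rw [← hk]; exact hzz.symm
      rcases hipow k with h | h | h | h <;> rw [h] at hw1
      · have hc : w1 = x * (1 + i) - x * i := by rw [hw1]; ring
        rw [h2, hc]; simp
      · have hc : w1 = x * (1 + i) - x := by rw [hw1]; ring
        rw [h2, hc]; simp
      · have hc : w1 = -x := by rw [hw1]; ring
        rw [h2, hc]; simp
      · have hc : w1 = -(x * i) := by rw [hw1]; ring
        rw [h2, hc]; simp
    · have hzz : z' = w1 := by rw [hz', if_neg (by rw [h2]; decide)]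
      have hw1 : w1 = i ^ k * x := by rw [← hk]; exact hzz.symm
      rcases hipow k with h | h | h | h <;> rw [h] at hw1
      · have hc : w1 = x := by rw [hw1]; ring
        rw [h2, hc]; simp
      · have hc : w1 = x * i := by rw [hw1]; ring
        rw [h2, hc]; simp
      · have hc : w1 = x * i - x * (1 + i) := by rw [hw1]; ring
        rw [h2, hc]; simp
      · have hc : w1 = x - x * (1 + i) := by rw [hw1]; ring
        rw [h2, hc]; simp
  refine ⟨R'.val.map blkP, ?_, ?_⟩
  · intro F hF
    rw [Multiset.mem_map] at hF
    obtain ⟨x, hxR, rfl⟩ := hF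
    exact hblkcard x (hR'mem x (Finset.mem_def.2 hxR)).1
  · rw [Multiset.bind_map]
    have hle : (Finset.univ.filter fun w : ZMod g × ZMod 3 => w.1 ≠ 0).val ≤
        R'.val.bind (fun x => blockDiffs (blkP x)) := by
      rw [Multiset.le_iff_count]
      intro a
      by_cases ha : a.1 = 0
      · rw [Multiset.count_eq_zero_of_notMem (by
          rw [Finset.mem_val, Finset.mem_filter]; simp [ha])]
        exact Nat.zero_le _
      · have h1 : Multiset.count a (Finset.univ.filter fun w : ZMod g × ZMod 3 => w.1 ≠ 0).val = 1 :=
          Multiset.count_eq_one_of_mem (Finset.nodup _) (by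
            rw [Finset.mem_val, Finset.mem_filter]; exact ⟨Finset.mem_univ _, ha⟩)
        rw [h1]
        exact Multiset.one_le_count_iff_mem.2 (hcov a ha)
    refine (Multiset.eq_of_le_of_card_le hle ?_).symm
    have hc2 : Multiset.card (R'.val.bind fun x => blockDiffs (blkP x)) = R'.card * 12 := by
      rw [Multiset.card_bind]
      have hmc : Multiset.map (Multiset.card ∘ fun x => blockDiffs (blkP x)) R'.val =
          Multiset.map (fun _ => 12) R'.val := by
        apply Multiset.map_congr rfl
        intro x hx
        have hx0 := (hR'mem x (Finset.mem_def.2 hx)).1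
        simp only [Function.comp]
        rw [hDQ x hx0]
        rfl
      rw [hmc, Multiset.map_const', Multiset.sum_replicate, smul_eq_mul, Finset.card_def]
    have hc3 : (Finset.univ.filter fun w : ZMod g × ZMod 3 => w.1 ≠ 0).card = R'.card * 12 := by
      have hsplit : (Finset.univ.filter fun w : ZMod g × ZMod 3 => w.1 ≠ 0)
          = (Finset.univ.filter fun z : ZMod g => z ≠ 0) ×ˢ (Finset.univ : Finset (ZMod 3)) := by
        ext ⟨a, b⟩
        simp
      rw [hsplit, Finset.card_product, hcard1]
      have h3 : (Finset.univ : Finset (ZMod 3)).card = 3 := rfl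
      rw [h3]; ring
    have : (Finset.univ.filter fun w : ZMod g × ZMod 3 => w.1 ≠ 0).card
        = Multiset.card (Finset.univ.filter fun w : ZMod g × ZMod 3 => w.1 ≠ 0).val := rfl
    omega

lemma blockDiffs_map {G H : Type*} [AddGroup G] [AddGroup H] [DecidableEq G] [DecidableEq H]
    (f : G ↪ H) (hf : ∀ a b : G, f (a - b) = f a - f b) (F : Finset G) :
    blockDiffs (F.map f) = (blockDiffs F).map f := by
  classical
  unfold blockDiffs
  have hprod : (F.map f) ×ˢ (F.map f) = (F ×ˢ F).map (f.prodMap f) := by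
    ext ⟨u, v⟩
    simp only [Finset.mem_product, Finset.mem_map, Function.Embedding.coe_prodMap, Prod.ext_iff,
      Prod.map, Prod.exists]
    constructor
    · rintro ⟨⟨a, ha, rfl⟩, ⟨b, hb, rfl⟩⟩
      exact ⟨a, b, ⟨ha, hb⟩, rfl, rfl⟩
    · rintro ⟨a, b, ⟨ha, hb⟩, rfl, rfl⟩
      exact ⟨⟨a, ha, rfl⟩, ⟨b, hb, rfl⟩⟩
  rw [hprod, Finset.filter_map]
  simp only [Finset.map_val, Multiset.map_map]
  have h1 : ((F ×ˢ F).filter ((fun p => p.1 ≠ p.2) ∘ ⇑(f.prodMap f)))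
      = (F ×ˢ F).filter fun p => p.1 ≠ p.2 := by
    apply Finset.filter_congr
    intro p _
    simp [Function.Embedding.coe_prodMap, Prod.map, f.injective.ne_iff]
  rw [h1]
  apply Multiset.map_congr rfl
  intro p hp
  simp [Function.Embedding.coe_prodMap, Prod.map, hf]

lemma int_sq_neg_one_primepow {p : ℕ} (hp : p.Prime) (h4 : p % 4 = 1) :
    ∀ k : ℕ, ∃ a : ℤ, (p : ℤ)^k ∣ a^2 + 1 := by
  haveI : Fact p.Prime := ⟨hp⟩
  have hp2 : p ≠ 2 := by omega
  intro k
  induction k with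
  | zero => exact ⟨0, by simp⟩
  | succ k ih =>
    rcases Nat.eq_zero_or_pos k with rfl | hk
    · have hsq : IsSquare (-1 : ZMod p) := ZMod.exists_sq_eq_neg_one_iff.2 (by omega)
      obtain ⟨y, hy⟩ := hsq
      refine ⟨(y.val : ℤ), ?_⟩
      have : (((y.val:ℤ)^2 + 1 : ℤ) : ZMod p) = 0 := by
        push_cast
        rw [ZMod.natCast_zmod_val, ← sq] at *
        rw [← hy]; ring
      have := (ZMod.intCast_zmod_eq_zero_iff_dvd _ p).mp this
      simpa using this
    · obtain ⟨j, rfl⟩ : ∃ j, k = j + 1 := ⟨k - 1, by omega⟩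
      obtain ⟨a, m, hm⟩ := ih
      have ha : (a : ZMod p) ≠ 0 := by
        intro h0
        have hpd : (p:ℤ) ∣ a := (ZMod.intCast_zmod_eq_zero_iff_dvd _ p).mp h0
        have h1 : (p:ℤ) ∣ a^2 + 1 := (dvd_pow_self (p:ℤ) hk.ne').trans ⟨m, hm⟩
        have h2 : (p:ℤ) ∣ a^2 := by rw [sq]; exact hpd.mul_left a
        have h3 : (p:ℤ) ∣ 1 := (Int.dvd_add_right h2).mp h1
        have := Int.le_of_dvd one_pos h3
        have hpl : (2:ℤ) ≤ p := by exact_mod_cast hp.two_le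
        omega
      have h2a : (2 * (a : ZMod p)) ≠ 0 := by
        have h2 : (2 : ZMod p) ≠ 0 := by
          have hnd : ¬ (p ∣ 2) := by
            rw [Nat.prime_dvd_prime_iff_eq hp Nat.prime_two]
            exact hp2
          have := (ZMod.natCast_eq_zero_iff 2 p).not.mpr hnd
          simpa using this
        exact mul_ne_zero h2 ha
      set c : ZMod p := (-(m : ZMod p)) * (2 * (a:ZMod p))⁻¹ with hc
      set t : ℤ := (c.val : ℤ) with ht
      refine ⟨a + (p:ℤ)^(j+1) * t, ?_⟩
      have key : (p:ℤ) ∣ m + 2 * a * t := by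
        rw [← ZMod.intCast_zmod_eq_zero_iff_dvd]
        push_cast
        have hct : ((t : ℤ) : ZMod p) = c := by rw [ht]; push_cast; exact ZMod.natCast_zmod_val _
        rw [hct, hc]
        field_simp
        rw [div_self (left_ne_zero_of_mul h2a)]; ring
      obtain ⟨s, hs⟩ := key
      exact ⟨s + (p:ℤ)^j * t^2, by linear_combination hm + ((p:ℤ)^(j+1)) * hs⟩

lemma sqrt_neg_one (n : ℕ) (hn : ∀ p : ℕ, p.Prime → p ∣ n → p % 4 = 1) :
    IsSquare (-1 : ZMod n) := by
  induction n using Nat.recOnPosPrimePosCoprime with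
  | zero =>
    exfalso
    have := hn 3 (by norm_num) (dvd_zero 3)
    omega
  | one => exact ⟨0, Subsingleton.elim _ _⟩
  | prime_pow p k hpp hk =>
    have hpn : p.Prime := hpp
    have h4 : p % 4 = 1 := hn p hpn (dvd_pow_self p hk.ne')
    obtain ⟨a, ha⟩ := int_sq_neg_one_primepow hpn h4 k
    haveI : NeZero (p^k) := ⟨pow_ne_zero _ hpn.pos.ne'⟩
    have : ((a^2 + 1 : ℤ) : ZMod (p^k)) = 0 := by
      rw [ZMod.intCast_zmod_eq_zero_iff_dvd]
      exact_mod_cast ha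
    refine ⟨(a : ZMod (p^k)), ?_⟩
    push_cast at this
    linear_combination -this
  | coprime p q hp1 hq1 hco hP hQ =>
    exact ZMod.isSquare_neg_one_mul hco
      (hP fun r hr hd => hn r hr (hd.mul_right q))
      (hQ fun r hr hd => hn r hr (hd.mul_left p))


/-- A `(3g,3,4,1)`-CDF exists for every positive integer `g` all of whose
prime factors are congruent to `1` modulo `4`. -/
theorem stmt_6 (g : ℕ) (hg : 0 < g) (hp : ∀ p : ℕ, p.Prime → p ∣ g → p % 4 = 1) :
    ∃ 𝓕 : Multiset (Finset (ZMod (g * 3))), IsCDF g 3 4 𝓕 := by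
  classical
  haveI : NeZero g := ⟨hg.ne'⟩
  haveI : NeZero (g * 3) := ⟨by positivity⟩
  by_cases hg1 : g = 1
  · subst hg1
    refine ⟨0, ?_, ?_, ?_⟩
    · intro F hF; simp at hF
    · intro x _; simp
    · intro x hx
      exfalso
      apply hx
      rw [AddSubgroup.mem_zmultiples_iff]
      refine ⟨(x.val : ℤ), ?_⟩
      have h1 : ((1 : ℕ) : ZMod (1*3)) = 1 := by norm_num
      rw [h1, zsmul_eq_mul, mul_one]
      push_cast
      exact ZMod.natCast_zmod_val x
  · have hg1' : 1 < g := by omega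
    have h3 : ¬ (3 ∣ g) := fun hd => by have := hp 3 (by norm_num) hd; omega
    have hco : Nat.Coprime g 3 :=
      Nat.coprime_comm.mp ((Nat.Prime.coprime_iff_not_dvd (by norm_num)).mpr h3)
    have h2 : ¬ (2 ∣ g) := fun hd => by have := hp 2 Nat.prime_two hd; omega
    have h2u : IsUnit (2 : ZMod g) := by
      have := ZMod.isUnit_prime_of_not_dvd Nat.prime_two h2
      simpa using this
    obtain ⟨i0, hi0⟩ := sqrt_neg_one g hp
    have hi : i0 * i0 = -1 := hi0.symm
    obtain ⟨𝓕P, hcard4, hbind⟩ := main_construction hg1' i0 hi h2u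
    set e := ZMod.chineseRemainder hco with he
    set emb : (ZMod g × ZMod 3) ↪ ZMod (g*3) := e.symm.toEquiv.toEmbedding with hemb
    have hembeq : ∀ a : ZMod g × ZMod 3, emb a = e.symm a := fun a => rfl
    have hfsub : ∀ a b : ZMod g × ZMod 3, emb (a - b) = emb a - emb b := by
      intro a b
      rw [hembeq, hembeq, hembeq]
      exact map_sub e.symm a b
    have hBT : (𝓕P.map (fun F => F.map emb)).bind blockDiffs
        = (𝓕P.bind blockDiffs).map ⇑emb := by
      rw [Multiset.bind_map, Multiset.map_bind]
      exact Multiset.bind_congr (fun F _ => blockDiffs_map emb hfsub F)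
    have hcount : ∀ y : ZMod (g*3),
        Multiset.count y ((𝓕P.bind blockDiffs).map ⇑emb)
          = Multiset.count (e y) (𝓕P.bind blockDiffs) := by
      intro y
      have hy : y = emb (e y) := by rw [hembeq]; exact (e.symm_apply_apply y).symm
      conv_lhs => rw [hy]
      exact Multiset.count_map_eq_count' ⇑emb _ emb.injective (e y)
    have hfst : ∀ y : ZMod (g*3),
        (e y).1 = ZMod.castHom (dvd_mul_right g 3) (ZMod g) y := by
      have h := RingHom.ext_zmod
        ((RingHom.fst (ZMod g) (ZMod 3)).comp (e : ZMod (g*3) →+* ZMod g × ZMod 3))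
        (ZMod.castHom (dvd_mul_right g 3) (ZMod g))
      intro y
      exact DFunLike.congr_fun h y
    have hH : ∀ y : ZMod (g*3),
        y ∈ AddSubgroup.zmultiples ((g : ZMod (g*3))) ↔ (e y).1 = 0 := by
      intro y
      constructor
      · intro hy
        rw [AddSubgroup.mem_zmultiples_iff] at hy
        obtain ⟨k, rfl⟩ := hy
        rw [hfst, map_zsmul]
        have hg0 : (ZMod.castHom (dvd_mul_right g 3) (ZMod g)) ((g : ZMod (g*3))) = 0 := by
          rw [map_natCast, ZMod.natCast_self]
        rw [hg0, smul_zero]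
      · intro h0
        rw [hfst, ZMod.castHom_apply, ← ZMod.natCast_val] at h0
        obtain ⟨m, hm⟩ := (ZMod.natCast_eq_zero_iff _ _).mp h0
        rw [AddSubgroup.mem_zmultiples_iff]
        refine ⟨(m : ℤ), ?_⟩
        have hy : ((y.val : ℕ) : ZMod (g*3)) = y := ZMod.natCast_zmod_val y
        rw [← hy, hm, zsmul_eq_mul]
        push_cast
        ring
    refine ⟨𝓕P.map (fun F => F.map emb), ?_, ?_, ?_⟩
    · intro F hF
      rw [Multiset.mem_map] at hF
      obtain ⟨F0, hF0, rfl⟩ := hF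
      rw [Finset.card_map]
      exact hcard4 F0 hF0
    · intro x hx
      rw [hBT, hcount, hbind]
      apply Multiset.count_eq_zero_of_notMem
      rw [Finset.mem_val, Finset.mem_filter]
      rw [hH x] at hx
      simp [hx]
    · intro x hx
      rw [hBT, hcount, hbind]
      apply Multiset.count_eq_one_of_mem (Finset.nodup _)
      rw [Finset.mem_val, Finset.mem_filter]
      rw [hH x] at hx
      exact ⟨Finset.mem_univ _, hx⟩
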